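/- Let Q be a convex quadrilateral with diagonals intersecting at a point o. Each diagonal splits the two interior angles at its endpoints into two parts, yielding 8 angles in total (the angles ∠o a b where a, b are adjacent vertices). At least 5 of these 8 angles are at most π/2. -/

import Mathlib

open Real EuclideanGeometry

open Classical in
/-- In a convex quadrilateral `a b c d` (in convex-position order) whose
diagonals `ac` and `bd` intersect at an interior point `o`, at least 5 of the 8 angles
∠oab, ∠oba, ∠obc, ∠ocb, ∠ocd, ∠odc, ∠oda, ∠oad are at most π/2. -/
theorem five_of_eight_angles_le_pi_div_two
    (a b c d o : EuclideanSpace ℝ (Fin 2))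
    (hconv : ∀ p ∈ ({a, b, c, d} : Set (EuclideanSpace ℝ (Fin 2))),
      p ∉ convexHull ℝ (({a, b, c, d} : Set (EuclideanSpace ℝ (Fin 2))) \ {p}))
    (hoac : o ∈ segment ℝ a c) (hobd : o ∈ segment ℝ b d)
    (ho : o ≠ a ∧ o ≠ b ∧ o ≠ c ∧ o ≠ d) :
    5 ≤ (Finset.univ.filter (fun i : Fin 8 =>
      (![∠ o a b, ∠ o b a, ∠ o b c, ∠ o c b, ∠ o c d, ∠ o d c, ∠ o d a, ∠ o a d] i)
        ≤ π / 2)).card := by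
  obtain ⟨hoa, hob, hoc, hod⟩ := ho
  set f : Fin 8 → ℝ :=
    ![∠ o a b, ∠ o b a, ∠ o b c, ∠ o c b, ∠ o c d, ∠ o d c, ∠ o d a, ∠ o a d] with hf
  -- o is strictly between a and c
  have hsbtw : Sbtw ℝ a o c := ⟨mem_segment_iff_wbtw.mp hoac, hoa, hoc⟩
  have haoc : ∠ a o c = π := hsbtw.angle₁₂₃_eq_pi
  -- vertical angle sums
  have hb : ∠ b o a + ∠ b o c = π := angle_add_angle_eq_pi_of_angle_eq_pi b haoc
  have hd : ∠ d o a + ∠ d o c = π := angle_add_angle_eq_pi_of_angle_eq_pi d haoc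
  -- triangle sums
  have t1 : ∠ o a b + ∠ a b o + ∠ b o a = π :=
    angle_add_angle_add_angle_eq_pi b hoa.symm
  have t2 : ∠ o b c + ∠ b c o + ∠ c o b = π :=
    angle_add_angle_add_angle_eq_pi c hob.symm
  have t3 : ∠ o c d + ∠ c d o + ∠ d o c = π :=
    angle_add_angle_add_angle_eq_pi d hoc.symm
  have t4 : ∠ o d a + ∠ d a o + ∠ a o d = π :=
    angle_add_angle_add_angle_eq_pi a hod.symm
  rw [angle_comm a b o] at t1
  rw [angle_comm b c o, angle_comm c o b] at t2
  rw [angle_comm c d o] at t3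
  rw [angle_comm d a o, angle_comm a o d] at t4
  have hsum : ∑ i : Fin 8, f i = 2 * π := by
    rw [Fin.sum_univ_eight]
    have e0 : f 0 = ∠ o a b := rfl
    have e1 : f 1 = ∠ o b a := rfl
    have e2 : f 2 = ∠ o b c := rfl
    have e3 : f 3 = ∠ o c b := rfl
    have e4 : f 4 = ∠ o c d := rfl
    have e5 : f 5 = ∠ o d c := rfl
    have e6 : f 6 = ∠ o d a := rfl
    have e7 : f 7 = ∠ o a d := rfl
    rw [e0, e1, e2, e3, e4, e5, e6, e7]
    linarith
  have hnn : ∀ i : Fin 8, 0 ≤ f i := by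
    intro i
    fin_cases i <;> exact angle_nonneg _ _ _
  by_contra hlt
  push_neg at hlt
  set s := Finset.univ.filter (fun i : Fin 8 => f i ≤ π / 2) with hs
  have hcompl : sᶜ = Finset.univ.filter (fun i : Fin 8 => π / 2 < f i) := by
    ext i
    simp only [hs, Finset.mem_compl, Finset.mem_filter, Finset.mem_univ, true_and, not_le]
  have hcard : 4 ≤ sᶜ.card := by
    have := Finset.card_compl s
    simp only [Fintype.card_fin] at this
    omega
  have h1 : (sᶜ.card : ℝ) * (π / 2) < ∑ i ∈ sᶜ, f i := by
    have : ∀ i ∈ sᶜ, π / 2 < f i := by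
      intro i hi; rw [hcompl] at hi
      exact (Finset.mem_filter.mp hi).2
    calc (sᶜ.card : ℝ) * (π / 2) = ∑ _i ∈ sᶜ, π / 2 := by
          rw [Finset.sum_const, nsmul_eq_mul]
      _ < ∑ i ∈ sᶜ, f i := by
          apply Finset.sum_lt_sum_of_nonempty
          · rw [← Finset.card_pos]; omega
          · exact this
  have h2 : ∑ i ∈ sᶜ, f i ≤ ∑ i : Fin 8, f i :=
    Finset.sum_le_sum_of_subset_of_nonneg (Finset.subset_univ _)
      (fun i _ _ => hnn i)
  have h3 : (4 : ℝ) * (π / 2) ≤ (sᶜ.card : ℝ) * (π / 2) := by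
    apply mul_le_mul_of_nonneg_right _ (by positivity)
    exact_mod_cast hcard
  rw [hsum] at h2
  linarith
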